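/- (Underestimation invariance) Define OPT_{n+1} = 0 and OPT_t = E[max(v_t, OPT_{t+1})] for t = n,...,1, where v_1,...,v_n are independent nonnegative integrable random variables. Given g_0 with 0 ≤ g_0 ≤ OPT_1, define recursively g_t = min{x ≥ 0 : E[max(v_t, x)] ≥ g_{t-1}}. Then g_t ≤ OPT_{t+1} for all t ∈ [n]. -/

import Mathlib

open MeasureTheory ProbabilityTheory

/-- Underestimation invariance: with `OPT (n+1) = 0`,
`OPT t = E[max (v t) (OPT (t+1))]`, and `g t = min {x ≥ 0 : E[max (v t) x] ≥ g (t-1)}`,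
if `0 ≤ g 0 ≤ OPT 1` then `g t ≤ OPT (t+1)` for every `t ∈ [n]`. -/
theorem underestimation_invariance
    {Ω : Type*} [MeasureSpace Ω] [IsProbabilityMeasure (ℙ : Measure Ω)]
    (n : ℕ) (v : ℕ → Ω → ℝ)
    (hmeas : ∀ i, Measurable (v i))
    (hnn : ∀ i ω, 0 ≤ v i ω)
    (hint : ∀ i, Integrable (v i))
    (hindep : iIndepFun v ℙ)
    (OPT : ℕ → ℝ)
    (hOPTlast : OPT (n + 1) = 0)
    (hOPTrec : ∀ t ∈ Finset.Icc 1 n, OPT t = ∫ ω, max (v t ω) (OPT (t + 1)))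
    (g : ℕ → ℝ)
    (hg0nn : 0 ≤ g 0) (hg0 : g 0 ≤ OPT 1)
    (hgrec : ∀ t ∈ Finset.Icc 1 n,
      IsLeast {x : ℝ | 0 ≤ x ∧ g (t - 1) ≤ ∫ ω, max (v t ω) x} (g t)) :
    ∀ t ∈ Finset.Icc 1 n, g t ≤ OPT (t + 1) := by
  -- OPT is nonnegative on [1, n+1], by downward induction
  have hOPTnn : ∀ k t, t + k = n + 1 → 1 ≤ t → 0 ≤ OPT t := by
    intro k
    induction k with
    | zero =>
      intro t ht _
      simp only [Nat.add_zero] at ht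
      rw [ht, hOPTlast]
    | succ k ih =>
      intro t ht h1
      have htn : t ≤ n := by omega
      rw [hOPTrec t (Finset.mem_Icc.mpr ⟨h1, htn⟩)]
      refine integral_nonneg fun ω => ?_
      exact le_trans (hnn t ω) (le_max_left _ _)
  have hOPTnn' : ∀ t, 1 ≤ t → t ≤ n + 1 → 0 ≤ OPT t := by
    intro t h1 h2
    exact hOPTnn (n + 1 - t) t (by omega) h1
  -- main induction: g (t-1) ≤ OPT t implies g t ≤ OPT (t+1)
  have main : ∀ t, 1 ≤ t → t ≤ n → g t ≤ OPT (t + 1) := by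
    intro t
    induction t with
    | zero => intro h; omega
    | succ t ih =>
      intro h1 h2
      have hprev : g t ≤ OPT (t + 1) := by
        rcases Nat.eq_zero_or_pos t with h0 | hpos
        · subst h0; simpa using hg0
        · exact ih hpos (by omega)
      have hmem := hgrec (t + 1) (Finset.mem_Icc.mpr ⟨h1, h2⟩)
      refine hmem.2 ⟨hOPTnn' (t + 2) (by omega) (by omega), ?_⟩
      have := hOPTrec (t + 1) (Finset.mem_Icc.mpr ⟨h1, h2⟩)
      simpa [Nat.add_sub_cancel] using hprev.trans_eq this
  intro t ht
  rw [Finset.mem_Icc] at ht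
  exact main t ht.1 ht.2
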